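/- The operator H defined by H(g)(x) = ∫_{Z_p} A(|x−y|_p) f(g(y)) dy + ∫_{Z_p} B(|x−y|_p) U(y) dy + Z(x) maps C(Z_p, ℝ) to itself and satisfies ‖H(g) − H(g′)‖_∞ ≤ L(f) ‖A‖_{L^1} ‖g − g′‖_∞ for all continuous g, g′. -/

import Mathlib

open MeasureTheory

theorem cnn_operator_lipschitz (p : ℕ) [Fact p.Prime]
    [MeasurableSpace ℤ_[p]] [BorelSpace ℤ_[p]]
    (μ : Measure ℤ_[p]) [IsProbabilityMeasure μ] [μ.IsAddLeftInvariant]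
    (A B : ℝ → ℝ)
    (hA : Integrable (fun y : ℤ_[p] => A ‖y‖) μ)
    (hB : Integrable (fun y : ℤ_[p] => B ‖y‖) μ)
    (U Z : C(ℤ_[p], ℝ))
    (L : NNReal) (f : ℝ → ℝ) (hf : LipschitzWith L f) (hf0 : f 0 = 0)
    (H : C(ℤ_[p], ℝ) → ℤ_[p] → ℝ)
    (hH : ∀ g x, H g x =
      (∫ y, A ‖x - y‖ * f (g y) ∂μ) + (∫ y, B ‖x - y‖ * U y ∂μ) + Z x) :
    (∀ g, Continuous (H g)) ∧
    (∀ g g' : C(ℤ_[p], ℝ), ∀ x : ℤ_[p],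
      |H g x - H g' x| ≤ (L : ℝ) * (∫ y, |A ‖y‖| ∂μ) * ‖g - g'‖) := by
  -- translation: for any function φ : ℝ → ℝ and h : ℤ_[p] → ℝ
  have shift : ∀ (φ : ℝ → ℝ) (h : ℤ_[p] → ℝ) (x : ℤ_[p]),
      (∫ y, φ ‖x - y‖ * h y ∂μ) = ∫ y, φ ‖y‖ * h (y + x) ∂μ := by
    intro φ h x
    rw [← MeasureTheory.integral_add_right_eq_self
      (fun y : ℤ_[p] => φ ‖x - y‖ * h y) x]
    congr 1
    ext y
    have : x - (y + x) = -y := by ring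
    rw [this, norm_neg]
  -- pointwise bound for f composed with a continuous map
  have fbound : ∀ (g : C(ℤ_[p], ℝ)) (t : ℤ_[p]), |f (g t)| ≤ (L : ℝ) * ‖g‖ := by
    intro g t
    have h1 : |f (g t) - f 0| ≤ (L : ℝ) * |g t - 0| := by
      simpa [Real.dist_eq] using hf.dist_le_mul (g t) 0
    have h2 : |g t| ≤ ‖g‖ := by
      simpa using ContinuousMap.norm_coe_le_norm g t
    calc |f (g t)| = |f (g t) - f 0| := by rw [hf0]; ring_nf
      _ ≤ (L : ℝ) * |g t - 0| := h1
      _ = (L : ℝ) * |g t| := by rw [sub_zero]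
      _ ≤ (L : ℝ) * ‖g‖ := by
          exact mul_le_mul_of_nonneg_left h2 (by positivity)
  -- integrability of the shifted kernel
  have hAx : ∀ x : ℤ_[p], Integrable (fun y : ℤ_[p] => A ‖x - y‖) μ := by
    intro x
    have := hA.comp_sub_right x
    simpa [norm_sub_rev] using this.congr (Filter.Eventually.of_forall
      (fun y => by rw [norm_sub_rev]))
  constructor
  · -- continuity
    intro g
    have hHg : H g = fun x =>
        (∫ y, A ‖y‖ * f (g (y + x)) ∂μ) + (∫ y, B ‖y‖ * U (y + x) ∂μ) + Z x := by
      funext x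
      rw [hH g x, shift A (fun t => f (g t)) x, shift B U x]
    rw [hHg]
    have c1 : Continuous fun x : ℤ_[p] => ∫ y, A ‖y‖ * f (g (y + x)) ∂μ := by
      apply MeasureTheory.continuous_of_dominated
        (bound := fun y : ℤ_[p] => |A ‖y‖| * ((L : ℝ) * ‖g‖))
      · intro x
        exact hA.aestronglyMeasurable.mul
          ((hf.continuous.comp (g.continuous.comp
            (continuous_id.add continuous_const))).aestronglyMeasurable)
      · intro x
        filter_upwards with y
        have := fbound g (y + x)
        calc ‖A ‖y‖ * f (g (y + x))‖ = |A ‖y‖| * |f (g (y + x))| := abs_mul _ _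
          _ ≤ |A ‖y‖| * ((L : ℝ) * ‖g‖) :=
            mul_le_mul_of_nonneg_left this (abs_nonneg _)
      · exact hA.abs.mul_const _
      · filter_upwards with y
        exact continuous_const.mul (hf.continuous.comp (g.continuous.comp
          (continuous_const.add continuous_id)))
    have c2 : Continuous fun x : ℤ_[p] => ∫ y, B ‖y‖ * U (y + x) ∂μ := by
      apply MeasureTheory.continuous_of_dominated
        (bound := fun y : ℤ_[p] => |B ‖y‖| * ‖U‖)
      · intro x
        exact hB.aestronglyMeasurable.mul
          ((U.continuous.comp (continuous_id.add continuous_const)).aestronglyMeasurable)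
      · intro x
        filter_upwards with y
        have h2 : |U (y + x)| ≤ ‖U‖ := by
          simpa using ContinuousMap.norm_coe_le_norm U (y + x)
        calc ‖B ‖y‖ * U (y + x)‖ = |B ‖y‖| * |U (y + x)| := abs_mul _ _
          _ ≤ |B ‖y‖| * ‖U‖ := mul_le_mul_of_nonneg_left h2 (abs_nonneg _)
      · exact hB.abs.mul_const _
      · filter_upwards with y
        exact continuous_const.mul (U.continuous.comp
          (continuous_const.add continuous_id))
    exact ((c1.add c2).add Z.continuous)
  · -- Lipschitz estimate
    intro g g' x
    have hint : ∀ h : C(ℤ_[p], ℝ), Integrable (fun y : ℤ_[p] => A ‖x - y‖ * f (h y)) μ := by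
      intro h
      have := (hAx x).bdd_mul ((hf.continuous.comp h.continuous).aestronglyMeasurable)
        (c := (L : ℝ) * ‖h‖) (Filter.Eventually.of_forall fun y => by simpa [Real.norm_eq_abs] using fbound h y)
      exact this.congr (Filter.Eventually.of_forall (fun y => by simp [mul_comm]))
    have hdiff : H g x - H g' x =
        ∫ y, A ‖x - y‖ * (f (g y) - f (g' y)) ∂μ := by
      rw [hH g x, hH g' x]
      have : ∀ y : ℤ_[p], A ‖x - y‖ * (f (g y) - f (g' y)) =
          A ‖x - y‖ * f (g y) - A ‖x - y‖ * f (g' y) := fun y => by ring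
      simp_rw [this]
      rw [MeasureTheory.integral_sub (hint g) (hint g')]
      ring
    rw [hdiff]
    have key : ∀ y : ℤ_[p], ‖A ‖x - y‖ * (f (g y) - f (g' y))‖ ≤
        |A ‖x - y‖| * ((L : ℝ) * ‖g - g'‖) := by
      intro y
      have h1 : |f (g y) - f (g' y)| ≤ (L : ℝ) * |g y - g' y| := by
        simpa [Real.dist_eq] using hf.dist_le_mul (g y) (g' y)
      have h2 : |g y - g' y| ≤ ‖g - g'‖ := by
        simpa [sub_eq_add_neg] using ContinuousMap.norm_coe_le_norm (g - g') y
      calc ‖A ‖x - y‖ * (f (g y) - f (g' y))‖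
          = |A ‖x - y‖| * |f (g y) - f (g' y)| := abs_mul _ _
        _ ≤ |A ‖x - y‖| * ((L : ℝ) * ‖g - g'‖) := by
            refine mul_le_mul_of_nonneg_left ?_ (abs_nonneg _)
            exact h1.trans (mul_le_mul_of_nonneg_left h2 (by positivity))
    have step1 : |∫ y, A ‖x - y‖ * (f (g y) - f (g' y)) ∂μ| ≤
        ∫ y, |A ‖x - y‖| * ((L : ℝ) * ‖g - g'‖) ∂μ := by
      rw [← Real.norm_eq_abs]
      refine (MeasureTheory.norm_integral_le_integral_norm _).trans ?_
      have hi : Integrable (fun y : ℤ_[p] => ‖A ‖x - y‖ * (f (g y) - f (g' y))‖) μ := by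
        have := ((hint g).sub (hint g')).norm
        exact this.congr (Filter.Eventually.of_forall (fun y => by
          simp [mul_sub]))
      exact MeasureTheory.integral_mono hi ((hAx x).abs.mul_const _) key
    have step2 : (∫ y, |A ‖x - y‖| * ((L : ℝ) * ‖g - g'‖) ∂μ) =
        (∫ y, |A ‖y‖| ∂μ) * ((L : ℝ) * ‖g - g'‖) := by
      rw [MeasureTheory.integral_mul_const]
      congr 1
      have := shift (fun t => |A t|) (fun _ => (1 : ℝ)) x
      simpa using this
    calc |∫ y, A ‖x - y‖ * (f (g y) - f (g' y)) ∂μ|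
        ≤ (∫ y, |A ‖y‖| ∂μ) * ((L : ℝ) * ‖g - g'‖) := by rw [← step2]; exact step1
      _ = (L : ℝ) * (∫ y, |A ‖y‖| ∂μ) * ‖g - g'‖ := by ring
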